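/- With the true propensity score, E[T W Z | p] = E[(1-T) W Z | p] = E[Z | p] almost surely, i.e., local balance holds. -/

import Mathlib

open MeasureTheory

lemma pi_norm_le_sum_abs {M : ℕ} (x : Fin M → ℝ) : ‖x‖ ≤ ∑ i, |x i| := by
  refine pi_norm_le_iff_of_nonneg (by positivity) |>.mpr fun i => ?_
  rw [Real.norm_eq_abs]
  exact Finset.single_le_sum (f := fun j => |x j|) (fun j _ => abs_nonneg _) (Finset.mem_univ i)

lemma balance_aux {Ω : Type*} [m0 : MeasurableSpace Ω] (μ : Measure Ω) [IsProbabilityMeasure μ]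
    {M : ℕ} (Z : Ω → (Fin M → ℝ)) (hZ : Measurable Z)
    (S : Ω → ℝ) (hS : Measurable S) (hS01 : ∀ ω, S ω = 0 ∨ S ω = 1)
    (q : Ω → ℝ) (hqm : Measurable[MeasurableSpace.comap Z inferInstance] q)
    (hq : μ[S | MeasurableSpace.comap Z inferInstance] =ᵐ[μ] q)
    (hq01 : ∀ᵐ ω ∂μ, q ω ∈ Set.Ioo (0 : ℝ) 1)
    (hint : Integrable (fun ω => (∑ i, |Z ω i|) / q ω) μ) :
    Z =ᵐ[μ] μ[(fun ω => (S ω / q ω) • Z ω) | MeasurableSpace.comap Z inferInstance] := by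
  have hm : MeasurableSpace.comap Z inferInstance ≤ m0 := hZ.comap_le
  have hZm : Measurable[MeasurableSpace.comap Z inferInstance] Z :=
    measurable_iff_comap_le.mpr le_rfl
  have hq' : Measurable q := hqm.mono hm le_rfl
  have hSabs : ∀ ω, |S ω| ≤ 1 := by
    intro ω; rcases hS01 ω with h | h <;> simp [h]
  have hSint : Integrable S μ := by
    refine Integrable.mono' (integrable_const (1 : ℝ)) hS.aestronglyMeasurable ?_
    exact Filter.Eventually.of_forall fun ω => by simpa using hSabs ω
  have hsum_nonneg : ∀ ω, (0 : ℝ) ≤ ∑ i, |Z ω i| := fun ω =>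
    Finset.sum_nonneg fun i _ => abs_nonneg _
  have hbound : ∀ᵐ ω ∂μ, ‖(S ω / q ω) • Z ω‖ ≤ (∑ i, |Z ω i|) / q ω := by
    filter_upwards [hq01] with ω hω
    rw [norm_smul, Real.norm_eq_abs, abs_div, abs_of_pos hω.1, div_mul_eq_mul_div]
    have h1 : |S ω| * ‖Z ω‖ ≤ ∑ i, |Z ω i| := by
      calc |S ω| * ‖Z ω‖ ≤ 1 * ‖Z ω‖ :=
            mul_le_mul_of_nonneg_right (hSabs ω) (norm_nonneg _)
        _ = ‖Z ω‖ := one_mul _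
        _ ≤ ∑ i, |Z ω i| := pi_norm_le_sum_abs _
    exact div_le_div_of_nonneg_right h1 hω.1.le |>.trans le_rfl
  have hFmeas : AEStronglyMeasurable (fun ω => (S ω / q ω) • Z ω) μ :=
    ((hS.div hq').smul hZ).aestronglyMeasurable
  have hFint : Integrable (fun ω => (S ω / q ω) • Z ω) μ :=
    Integrable.mono' hint hFmeas hbound
  have hZbound : ∀ᵐ ω ∂μ, ‖Z ω‖ ≤ (∑ i, |Z ω i|) / q ω := by
    filter_upwards [hq01] with ω hω
    refine (pi_norm_le_sum_abs _).trans ?_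
    rw [le_div_iff₀ hω.1]
    nlinarith [hsum_nonneg ω, hω.2]
  have hZint : Integrable Z μ := Integrable.mono' hint hZ.aestronglyMeasurable hZbound
  refine ae_eq_condExp_of_forall_setIntegral_eq hm hFint
    (fun s _ _ => hZint.integrableOn) (fun s hs hμs => ?_)
    ((hZm.stronglyMeasurable).aestronglyMeasurable)
  funext i
  have e1 : (∫ x in s, Z x ∂μ) i = ∫ x in s, Z x i ∂μ := by
    have := (ContinuousLinearMap.proj (R := ℝ) (φ := fun _ : Fin M => ℝ) i).integral_comp_comm
      (hZint.integrableOn (s := s))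
    simpa using this.symm
  have e2 : (∫ x in s, (S x / q x) • Z x ∂μ) i = ∫ x in s, (S x / q x) * Z x i ∂μ := by
    have := (ContinuousLinearMap.proj (R := ℝ) (φ := fun _ : Fin M => ℝ) i).integral_comp_comm
      (hFint.integrableOn (s := s))
    simpa using this.symm
  rw [e1, e2]
  have hhm : Measurable[MeasurableSpace.comap Z inferInstance]
      (fun ω => (q ω)⁻¹ * Z ω i) := hqm.inv.mul ((measurable_pi_apply i).comp hZm)
  have hhS_int : Integrable (fun ω => ((q ω)⁻¹ * Z ω i) * S ω) μ := by
    refine Integrable.mono' hint ((hhm.mono hm le_rfl).mul hS).aestronglyMeasurable ?_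
    filter_upwards [hq01] with ω hω
    rw [Real.norm_eq_abs, abs_mul, abs_mul, abs_inv, abs_of_pos hω.1, div_eq_inv_mul]
    have h1 : |Z ω i| * |S ω| ≤ ∑ j, |Z ω j| := by
      calc |Z ω i| * |S ω| ≤ |Z ω i| * 1 :=
            mul_le_mul_of_nonneg_left (hSabs ω) (abs_nonneg _)
        _ ≤ ∑ j, |Z ω j| := by
            rw [mul_one]
            exact Finset.single_le_sum (f := fun j => |Z ω j|)
              (fun j _ => abs_nonneg _) (Finset.mem_univ i)
    calc (q ω)⁻¹ * |Z ω i| * |S ω| = (q ω)⁻¹ * (|Z ω i| * |S ω|) := by ring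
      _ ≤ (q ω)⁻¹ * ∑ j, |Z ω j| :=
          mul_le_mul_of_nonneg_left h1 (inv_nonneg.mpr hω.1.le)
  have key : μ[(fun ω => ((q ω)⁻¹ * Z ω i) * S ω) | MeasurableSpace.comap Z inferInstance]
      =ᵐ[μ] fun ω => ((q ω)⁻¹ * Z ω i) *
        (μ[S | MeasurableSpace.comap Z inferInstance]) ω :=
    condExp_mul_of_stronglyMeasurable_left hhm.stronglyMeasurable hhS_int hSint
  calc ∫ x in s, Z x i ∂μ = ∫ x in s, ((q x)⁻¹ * Z x i) * q x ∂μ := by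
        refine integral_congr_ae (ae_restrict_of_ae ?_)
        filter_upwards [hq01] with ω hω
        rw [mul_comm ((q ω)⁻¹) (Z ω i), mul_assoc, inv_mul_cancel₀ hω.1.ne', mul_one]
      _ = ∫ x in s, ((q x)⁻¹ * Z x i) *
            (μ[S | MeasurableSpace.comap Z inferInstance]) x ∂μ := by
        refine integral_congr_ae (ae_restrict_of_ae ?_)
        filter_upwards [hq] with ω hω
        rw [hω]
      _ = ∫ x in s, (μ[(fun ω => ((q ω)⁻¹ * Z ω i) * S ω) |
            MeasurableSpace.comap Z inferInstance]) x ∂μ := by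
        refine integral_congr_ae (ae_restrict_of_ae ?_)
        filter_upwards [key] with ω hω
        rw [hω]
      _ = ∫ x in s, ((q x)⁻¹ * Z x i) * S x ∂μ := setIntegral_condExp hm hhS_int hs
      _ = ∫ x in s, (S x / q x) * Z x i ∂μ := by
        refine integral_congr_ae (ae_restrict_of_ae (Filter.Eventually.of_forall fun ω => ?_))
        ring

/-- With the true propensity score, local balance holds:
`E[T W Z ∣ p] = E[(1-T) W Z ∣ p] = E[Z ∣ p]` a.s. -/
theorem true_propensity_local_balance
    {Ω : Type*} [MeasurableSpace Ω] (μ : Measure Ω) [IsProbabilityMeasure μ]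
    {M : ℕ} (Z : Ω → (Fin M → ℝ)) (hZ : Measurable Z)
    (T : Ω → ℝ) (hT : Measurable T) (hT01 : ∀ ω, T ω = 0 ∨ T ω = 1)
    (p : Ω → ℝ) (hp : p = μ[T | MeasurableSpace.comap Z inferInstance])
    (hp01 : ∀ᵐ ω ∂μ, p ω ∈ Set.Ioo (0 : ℝ) 1)
    (W : Ω → ℝ) (hW : W = fun ω => 1 / (T ω * p ω + (1 - T ω) * (1 - p ω)))
    (hint1 : Integrable (fun ω => (∑ i, |Z ω i|) / p ω) μ)
    (hint0 : Integrable (fun ω => (∑ i, |Z ω i|) / (1 - p ω)) μ) :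
    (μ[fun ω => (T ω * W ω) • Z ω | MeasurableSpace.comap p inferInstance]
      =ᵐ[μ] μ[Z | MeasurableSpace.comap p inferInstance]) ∧
    (μ[fun ω => ((1 - T ω) * W ω) • Z ω | MeasurableSpace.comap p inferInstance]
      =ᵐ[μ] μ[Z | MeasurableSpace.comap p inferInstance]) := by
  have h2 : MeasurableSpace.comap Z inferInstance ≤ ‹MeasurableSpace Ω› := hZ.comap_le
  have hpm : Measurable[MeasurableSpace.comap Z inferInstance] p := by
    rw [hp]; exact stronglyMeasurable_condExp.measurable
  have h1 : MeasurableSpace.comap p inferInstance ≤ MeasurableSpace.comap Z inferInstance :=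
    hpm.comap_le
  have hTint : Integrable T μ := by
    refine Integrable.mono' (integrable_const (1 : ℝ)) hT.aestronglyMeasurable ?_
    refine Filter.Eventually.of_forall fun ω => ?_
    rcases hT01 ω with h | h <;> simp [h]
  constructor
  · have hq : μ[T | MeasurableSpace.comap Z inferInstance] =ᵐ[μ] p := by
      rw [hp]
    have haux := balance_aux μ Z hZ T hT hT01 p hpm hq hp01 hint1
    have e1 : (fun ω => (T ω * W ω) • Z ω) =ᵐ[μ] fun ω => (T ω / p ω) • Z ω := by
      filter_upwards [hp01] with ω hω
      rcases hT01 ω with h | h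
      · simp [h]
      · have hWω : W ω = 1 / p ω := by rw [hW]; simp [h]
        rw [hWω, h]; norm_num
    calc μ[fun ω => (T ω * W ω) • Z ω | MeasurableSpace.comap p inferInstance]
        =ᵐ[μ] μ[fun ω => (T ω / p ω) • Z ω | MeasurableSpace.comap p inferInstance] :=
          condExp_congr_ae e1
      _ =ᵐ[μ] μ[μ[fun ω => (T ω / p ω) • Z ω | MeasurableSpace.comap Z inferInstance] |
            MeasurableSpace.comap p inferInstance] :=
          (condExp_condExp_of_le (μ := μ) h1 h2).symm
      _ =ᵐ[μ] μ[Z | MeasurableSpace.comap p inferInstance] := condExp_congr_ae haux.symm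
  · have hSm : Measurable (fun ω => 1 - T ω) := measurable_const.sub hT
    have hS01 : ∀ ω, 1 - T ω = 0 ∨ 1 - T ω = 1 := by
      intro ω; rcases hT01 ω with h | h
      · right; rw [h]; ring
      · left; rw [h]; ring
    have hqm : Measurable[MeasurableSpace.comap Z inferInstance] (fun ω => 1 - p ω) :=
      measurable_const.sub hpm
    have hq : μ[(fun ω => 1 - T ω) | MeasurableSpace.comap Z inferInstance]
        =ᵐ[μ] fun ω => 1 - p ω := by
      have h1' : μ[(fun ω => (1 : ℝ) - T ω) | MeasurableSpace.comap Z inferInstance]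
          =ᵐ[μ] μ[(fun _ => (1 : ℝ)) | MeasurableSpace.comap Z inferInstance]
            - μ[T | MeasurableSpace.comap Z inferInstance] :=
        condExp_sub (integrable_const 1) hTint _
      have h2' : μ[(fun _ => (1 : ℝ)) | MeasurableSpace.comap Z inferInstance]
          = fun _ => (1 : ℝ) := condExp_const h2 1
      filter_upwards [h1'] with ω hω
      rw [hω]
      simp only [Pi.sub_apply, h2', hp]
    have hq01 : ∀ᵐ ω ∂μ, (1 - p ω) ∈ Set.Ioo (0 : ℝ) 1 := by
      filter_upwards [hp01] with ω hω
      exact ⟨by linarith [hω.2], by linarith [hω.1]⟩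
    have haux := balance_aux μ Z hZ (fun ω => 1 - T ω) hSm hS01
      (fun ω => 1 - p ω) hqm hq hq01 hint0
    have e1 : (fun ω => ((1 - T ω) * W ω) • Z ω)
        =ᵐ[μ] fun ω => ((1 - T ω) / (1 - p ω)) • Z ω := by
      filter_upwards [hp01] with ω hω
      rcases hT01 ω with h | h
      · have hWω : W ω = 1 / (1 - p ω) := by rw [hW]; simp [h]
        rw [hWω, h]; norm_num
      · rw [h]; norm_num
    calc μ[fun ω => ((1 - T ω) * W ω) • Z ω | MeasurableSpace.comap p inferInstance]
        =ᵐ[μ] μ[fun ω => ((1 - T ω) / (1 - p ω)) • Z ω |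
            MeasurableSpace.comap p inferInstance] := condExp_congr_ae e1
      _ =ᵐ[μ] μ[μ[fun ω => ((1 - T ω) / (1 - p ω)) • Z ω |
            MeasurableSpace.comap Z inferInstance] |
            MeasurableSpace.comap p inferInstance] :=
          (condExp_condExp_of_le (μ := μ) h1 h2).symm
      _ =ᵐ[μ] μ[Z | MeasurableSpace.comap p inferInstance] := condExp_congr_ae haux.symm
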